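/- Let F : [−D/2, D/2] → ℝ be continuous and let w₀, w₁ ∈ C²([−D/2, D/2]) satisfy wᵢ'' + F wᵢ = −μᵢ wᵢ with μ₀ < μ₁, w₀(±D/2) = w₁(±D/2) = 0, w₀ > 0 on (−D/2, D/2), and suppose ∫ₛ^{D/2} w₀ w₁ > 0 for every s ∈ (−D/2, D/2). Then w₀(s)w₁'(s) − w₁(s)w₀'(s) > 0 for all s ∈ (−D/2, D/2), and hence (w₁/w₀)'(s) > 0 on (−D/2, D/2). -/

import Mathlib

open Set MeasureTheory intervalIntegral

/-- If `w₀, w₁` are Dirichlet eigenfunctions of `w'' + Fw = −μw` with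
`μ₀ < μ₁`, `w₀ > 0` on the interior, and `∫ₛ^{D/2} w₀w₁ > 0` for all interior
`s`, then the Wronskian `w₀w₁' − w₁w₀'` is positive on the interior, and hence
`(w₁/w₀)' > 0` there. -/
theorem stmt11 (D μ₀ μ₁ : ℝ) (hD : 0 < D) (hμ : μ₀ < μ₁)
    (F w₀ w₁ w₀' w₁' w₀'' w₁'' : ℝ → ℝ)
    (hF : ContinuousOn F (Icc (-(D / 2)) (D / 2)))
    (h01 : ∀ s ∈ Icc (-(D / 2)) (D / 2), HasDerivAt w₀ (w₀' s) s)
    (h02 : ∀ s ∈ Icc (-(D / 2)) (D / 2), HasDerivAt w₀' (w₀'' s) s)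
    (h11 : ∀ s ∈ Icc (-(D / 2)) (D / 2), HasDerivAt w₁ (w₁' s) s)
    (h12 : ∀ s ∈ Icc (-(D / 2)) (D / 2), HasDerivAt w₁' (w₁'' s) s)
    (hc0 : ContinuousOn w₀'' (Icc (-(D / 2)) (D / 2)))
    (hc1 : ContinuousOn w₁'' (Icc (-(D / 2)) (D / 2)))
    (heq0 : ∀ s ∈ Icc (-(D / 2)) (D / 2), w₀'' s + F s * w₀ s = -μ₀ * w₀ s)
    (heq1 : ∀ s ∈ Icc (-(D / 2)) (D / 2), w₁'' s + F s * w₁ s = -μ₁ * w₁ s)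
    (hbc : w₀ (-(D / 2)) = 0 ∧ w₀ (D / 2) = 0 ∧ w₁ (-(D / 2)) = 0 ∧ w₁ (D / 2) = 0)
    (hpos : ∀ s ∈ Ioo (-(D / 2)) (D / 2), 0 < w₀ s)
    (hint : ∀ s ∈ Ioo (-(D / 2)) (D / 2),
      0 < ∫ τ in s..(D / 2), w₀ τ * w₁ τ) :
    ∀ s ∈ Ioo (-(D / 2)) (D / 2),
      0 < w₀ s * w₁' s - w₁ s * w₀' s ∧
      0 < deriv (fun τ => w₁ τ / w₀ τ) s := by
  intro s hs
  have hsIcc : s ∈ Icc (-(D / 2)) (D / 2) := Ioo_subset_Icc_self hs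
  have hsub : uIcc s (D / 2) ⊆ Icc (-(D / 2)) (D / 2) := by
    rw [uIcc_of_le hs.2.le]
    exact fun x hx => ⟨hs.1.le.trans hx.1, hx.2⟩
  -- derivative of the Wronskian
  have hW : ∀ x ∈ uIcc s (D / 2),
      HasDerivAt (fun t => w₀ t * w₁' t - w₁ t * w₀' t)
        ((μ₀ - μ₁) * (w₀ x * w₁ x)) x := by
    intro x hx
    have hxI := hsub hx
    have h := ((h01 x hxI).mul (h12 x hxI)).sub ((h11 x hxI).mul (h02 x hxI))
    refine h.congr_deriv ?_
    have e0 : w₀'' x = -μ₀ * w₀ x - F x * w₀ x := by linarith [heq0 x hxI]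
    have e1 : w₁'' x = -μ₁ * w₁ x - F x * w₁ x := by linarith [heq1 x hxI]
    rw [e0, e1]; ring
  have hcont : ContinuousOn (fun t => (μ₀ - μ₁) * (w₀ t * w₁ t))
      (Icc (-(D / 2)) (D / 2)) := by
    apply ContinuousOn.mul continuousOn_const
    exact ContinuousOn.mul
      (fun x hx => (h01 x hx).continuousAt.continuousWithinAt)
      (fun x hx => (h11 x hx).continuousAt.continuousWithinAt)
  have hInt : IntervalIntegrable (fun t => (μ₀ - μ₁) * (w₀ t * w₁ t))
      volume s (D / 2) := (hcont.mono hsub).intervalIntegrable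
  have hFTC := intervalIntegral.integral_eq_sub_of_hasDerivAt hW hInt
  have hend : w₀ (D / 2) * w₁' (D / 2) - w₁ (D / 2) * w₀' (D / 2) = 0 := by
    rw [hbc.2.1, hbc.2.2.2]; ring
  have hconst : (∫ t in s..(D / 2), (μ₀ - μ₁) * (w₀ t * w₁ t))
      = (μ₀ - μ₁) * ∫ t in s..(D / 2), w₀ t * w₁ t := by
    simp [intervalIntegral.integral_const_mul]
  have hWpos : 0 < w₀ s * w₁' s - w₁ s * w₀' s := by
    have := hint s hs
    nlinarith [hFTC, hconst, hend]
  refine ⟨hWpos, ?_⟩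
  have hw0 : 0 < w₀ s := hpos s hs
  have hq : HasDerivAt (fun τ => w₁ τ / w₀ τ)
      ((w₁' s * w₀ s - w₁ s * w₀' s) / (w₀ s) ^ 2) s :=
    (h11 s hsIcc).div (h01 s hsIcc) hw0.ne'
  rw [hq.deriv]
  apply div_pos (by linarith) (by positivity)
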